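/- Let 1 ≤ p < ∞ and let W be a matrix weight. Suppose (A_Q) is a sequence of positive definite matrices with |A_Q z|^p ≍ |Q|⁻¹ ∫_Q |W^{1/p}(x) z|^p dx for all z and all cubes Q in the family, with uniform constants. If W is doubling of order p with exponent β, then (A_Q) is strongly doubling of order (β, p): ‖A_Q A_P⁻¹‖^p ≤ C max{(ℓ(P)/ℓ(Q))^n, (ℓ(Q)/ℓ(P))^{β−n}} (1 + |x_Q − x_P| / max{ℓ(P), ℓ(Q)})^β for all cubes P, Q in the family. -/

import Mathlib

open MeasureTheory ComplexOrder
open scoped ENNReal NNReal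

noncomputable section

/-- The positive semidefinite `p`-th root `A^{1/p}` via the continuous functional calculus. -/
def matrixRpowInv (p : ℝ) {m : ℕ} (A : Matrix (Fin m) (Fin m) ℂ) : Matrix (Fin m) (Fin m) ℂ :=
  cfc (fun t : ℝ => t ^ (1 / p)) A

/-- The axis-parallel cube anchored at `x` (lower-left corner) with side length `l`. -/
def cubeA {n : ℕ} (x : EuclideanSpace ℝ (Fin n)) (l : ℝ) : Set (EuclideanSpace ℝ (Fin n)) :=
  {y | ∀ i, x i ≤ y i ∧ y i < x i + l}

/-- The average `|Q|⁻¹ ∫_Q |W^{1/p}(y) z|^p dy` over the anchored cube `Q = x + [0,l)^n`. -/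
def cubeAvg {n m : ℕ} (p : ℝ) (W : EuclideanSpace ℝ (Fin n) → Matrix (Fin m) (Fin m) ℂ)
    (x : EuclideanSpace ℝ (Fin n)) (l : ℝ) (z : EuclideanSpace ℂ (Fin m)) : ℝ≥0∞ :=
  (ENNReal.ofReal (l ^ n))⁻¹ *
    ∫⁻ y in cubeA x l, (‖Matrix.toEuclideanCLM (𝕜 := ℂ) (matrixRpowInv p (W y)) z‖₊ : ℝ≥0∞) ^ p

/-- The cube with the same center as `x + [0,l)^n` and twice the side length. -/
def cubeADouble {n : ℕ} (x : EuclideanSpace ℝ (Fin n)) (l : ℝ) :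
    Set (EuclideanSpace ℝ (Fin n)) :=
  {y | ∀ i, x i - l / 2 ≤ y i ∧ y i < x i - l / 2 + 2 * l}


section Aux

lemma coord_le_dist' {n : ℕ} (x y : EuclideanSpace ℝ (Fin n)) (i : Fin n) :
    |x i - y i| ≤ dist x y := by
  have h := EuclideanSpace.dist_eq x y
  have h1 : (x i - y i) ^ 2 ≤ ∑ j, dist (x j) (y j) ^ 2 := by
    have h2 : (x i - y i) ^ 2 = dist (x i) (y i) ^ 2 := by rw [Real.dist_eq, sq_abs]
    rw [h2]
    exact Finset.single_le_sum (f := fun j => dist (x j) (y j) ^ 2)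
      (fun j _ => sq_nonneg _) (Finset.mem_univ i)
  rw [h]
  calc |x i - y i| = Real.sqrt ((x i - y i) ^ 2) := (Real.sqrt_sq_eq_abs _).symm
    _ ≤ _ := Real.sqrt_le_sqrt h1

/-- Iterated doubling for an abstract integrand. -/
lemma iterate_doubling_aux' {n : ℕ} (g : EuclideanSpace ℝ (Fin n) → ℝ≥0∞) (c : ℝ≥0∞)
    (hdb : ∀ (x : EuclideanSpace ℝ (Fin n)) (l : ℝ), 0 < l →
      (∫⁻ y in cubeADouble x l, g y) ≤ c * ∫⁻ y in cubeA x l, g y)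
    (xP : EuclideanSpace ℝ (Fin n)) (lP : ℝ) (hlP : 0 < lP) (k : ℕ) :
    (∫⁻ y in cubeA (WithLp.toLp 2 (fun i => xP i + lP / 2 - 2 ^ k * lP / 2) : EuclideanSpace ℝ (Fin n))
        (2 ^ k * lP), g y) ≤ c ^ k * ∫⁻ y in cubeA xP lP, g y := by
  induction k with
  | zero =>
    have hset : cubeA (WithLp.toLp 2 (fun i => xP i + lP / 2 - 2 ^ 0 * lP / 2) : EuclideanSpace ℝ (Fin n))
        (2 ^ 0 * lP) = cubeA xP lP := by
      ext y
      simp only [cubeA, Set.mem_setOf_eq, pow_zero, one_mul, PiLp.toLp_apply]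
      exact forall_congr' fun i => by constructor <;> rintro ⟨a, b⟩ <;>
        exact ⟨by linarith, by linarith⟩
    rw [hset, pow_zero, one_mul]
  | succ k ih =>
    have h2 : (2:ℝ) ^ (k+1) = 2 * 2 ^ k := by ring
    have hset : cubeA (WithLp.toLp 2 (fun i => xP i + lP / 2 - 2 ^ (k+1) * lP / 2) : EuclideanSpace ℝ (Fin n))
        (2 ^ (k+1) * lP)
        = cubeADouble (WithLp.toLp 2 (fun i => xP i + lP / 2 - 2 ^ k * lP / 2) : EuclideanSpace ℝ (Fin n))
          (2 ^ k * lP) := by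
      ext y
      simp only [cubeA, cubeADouble, Set.mem_setOf_eq, PiLp.toLp_apply]
      exact forall_congr' fun i => by constructor <;> rintro ⟨a, b⟩ <;>
        exact ⟨by nlinarith, by nlinarith⟩
    rw [hset]
    calc (∫⁻ y in cubeADouble (WithLp.toLp 2 (fun i => xP i + lP / 2 - 2 ^ k * lP / 2) :
            EuclideanSpace ℝ (Fin n)) (2 ^ k * lP), g y)
        ≤ c * ∫⁻ y in cubeA (WithLp.toLp 2 (fun i => xP i + lP / 2 - 2 ^ k * lP / 2) :
            EuclideanSpace ℝ (Fin n)) (2 ^ k * lP), g y :=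
          hdb _ _ (by positivity)
      _ ≤ c * (c ^ k * ∫⁻ y in cubeA xP lP, g y) := mul_le_mul_right ih _
      _ = c ^ (k+1) * ∫⁻ y in cubeA xP lP, g y := by rw [pow_succ]; ring

lemma cube_subset_iter' {n : ℕ} (xQ xP : EuclideanSpace ℝ (Fin n)) (lQ lP : ℝ)
    (hlQ : 0 < lQ) (hlP : 0 < lP) (k : ℕ)
    (hk : lP + 2 * lQ + 2 * dist xQ xP ≤ 2 ^ k * lP) :
    cubeA xQ lQ ⊆ cubeA (WithLp.toLp 2 (fun i => xP i + lP / 2 - 2 ^ k * lP / 2) : EuclideanSpace ℝ (Fin n))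
      (2 ^ k * lP) := by
  intro y hy i
  have h1 := hy i
  have hd := abs_le.mp (coord_le_dist' xQ xP i)
  constructor
  · show xP i + lP / 2 - 2 ^ k * lP / 2 ≤ y i
    linarith [h1.1, hd.2]
  · show y i < xP i + lP / 2 - 2 ^ k * lP / 2 + 2 ^ k * lP
    linarith [h1.2, hd.1]

lemma exists_pow_two' (r : ℝ) (hr : 1 ≤ r) : ∃ k : ℕ, r ≤ 2 ^ k ∧ (2:ℝ) ^ k ≤ 2 * r := by
  have hne : ∃ j : ℕ, r ≤ (2:ℝ) ^ j := by
    obtain ⟨j, hj⟩ := pow_unbounded_of_one_lt r (one_lt_two (α := ℝ))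
    exact ⟨j, hj.le⟩
  classical
  refine ⟨Nat.find hne, Nat.find_spec hne, ?_⟩
  rcases Nat.eq_zero_or_pos (Nat.find hne) with h0 | h0
  · rw [h0]; norm_num; linarith
  · obtain ⟨j, hj⟩ := Nat.exists_eq_succ_of_ne_zero h0.ne'
    have hlt : ¬ (r ≤ (2:ℝ) ^ j) := Nat.find_min hne (by omega)
    push_neg at hlt
    rw [hj, pow_succ]
    nlinarith

lemma aux_arith' (n : ℕ) (β lP lQ D : ℝ) (hβ : 0 < β) (hlP : 0 < lP) (hlQ : 0 < lQ)
    (hD : 0 ≤ D) :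
    (lP / lQ) ^ n * (2 * ((lP + 2 * lQ + 2 * D) / lP)) ^ β ≤
      6 ^ β * (max ((lP / lQ) ^ (n : ℝ)) ((lQ / lP) ^ (β - n)) *
        (1 + D / max lP lQ) ^ β) := by
  have hmax0 : (0:ℝ) ≤ max ((lP / lQ) ^ (n : ℝ)) ((lQ / lP) ^ (β - n)) :=
    le_max_of_le_left (Real.rpow_nonneg (by positivity) _)
  rcases le_or_gt lQ lP with h | h
  · rw [max_eq_left h]
    have hbase : 2 * ((lP + 2 * lQ + 2 * D) / lP) ≤ 6 * (1 + D / lP) := by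
      have e : 2 * ((lP + 2 * lQ + 2 * D) / lP) = (2 * lP + 4 * lQ + 4 * D) / lP := by
        field_simp; ring
      have e2 : 6 * (1 + D / lP) = (6 * lP + 6 * D) / lP := by field_simp
      rw [e, e2, div_le_div_iff₀ hlP hlP]
      nlinarith
    have h2 : (2 * ((lP + 2 * lQ + 2 * D) / lP)) ^ β ≤ 6 ^ β * (1 + D / lP) ^ β := by
      rw [← Real.mul_rpow (by norm_num) (by positivity)]
      exact Real.rpow_le_rpow (by positivity) hbase hβ.le
    have h1 : (lP / lQ) ^ n ≤ max ((lP / lQ) ^ (n : ℝ)) ((lQ / lP) ^ (β - n)) := by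
      rw [← Real.rpow_natCast (lP / lQ) n]; exact le_max_left _ _
    calc (lP / lQ) ^ n * (2 * ((lP + 2 * lQ + 2 * D) / lP)) ^ β
        ≤ max ((lP / lQ) ^ (n : ℝ)) ((lQ / lP) ^ (β - n)) * (6 ^ β * (1 + D / lP) ^ β) :=
          mul_le_mul h1 h2 (by positivity) hmax0
      _ = 6 ^ β * (max ((lP / lQ) ^ (n : ℝ)) ((lQ / lP) ^ (β - n)) * (1 + D / lP) ^ β) := by
          ring
  · rw [max_eq_right h.le]
    have hbase : 2 * ((lP + 2 * lQ + 2 * D) / lP) ≤ 6 * (lQ / lP) * (1 + D / lQ) := by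
      have e : 2 * ((lP + 2 * lQ + 2 * D) / lP) = (2 * lP + 4 * lQ + 4 * D) / lP := by
        field_simp; ring
      have e2 : 6 * (lQ / lP) * (1 + D / lQ) = (6 * lQ + 6 * D) / lP := by
        field_simp
      rw [e, e2, div_le_div_iff₀ hlP hlP]
      nlinarith
    have h2 : (2 * ((lP + 2 * lQ + 2 * D) / lP)) ^ β ≤
        6 ^ β * (lQ / lP) ^ β * (1 + D / lQ) ^ β := by
      rw [← Real.mul_rpow (by norm_num) (div_nonneg hlQ.le hlP.le),
        ← Real.mul_rpow (mul_nonneg (by norm_num) (div_nonneg hlQ.le hlP.le)) (by positivity)]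
      exact Real.rpow_le_rpow (by positivity) hbase hβ.le
    have hkey : (lP / lQ) ^ n * (lQ / lP) ^ β = (lQ / lP) ^ (β - (n:ℝ)) := by
      have h1 : (lP / lQ) ^ n = (lQ / lP) ^ (-(n:ℝ)) := by
        rw [Real.rpow_neg (by positivity), Real.rpow_natCast, ← inv_pow, inv_div]
      rw [h1, ← Real.rpow_add (by positivity), show -(n:ℝ) + β = β - n by ring]
    calc (lP / lQ) ^ n * (2 * ((lP + 2 * lQ + 2 * D) / lP)) ^ β
        ≤ (lP / lQ) ^ n * (6 ^ β * (lQ / lP) ^ β * (1 + D / lQ) ^ β) :=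
          mul_le_mul_of_nonneg_left h2 (by positivity)
      _ = 6 ^ β * ((lQ / lP) ^ (β - (n:ℝ)) * (1 + D / lQ) ^ β) := by
          rw [← hkey]; ring
      _ ≤ 6 ^ β * (max ((lP / lQ) ^ (n : ℝ)) ((lQ / lP) ^ (β - n)) * (1 + D / lQ) ^ β) := by
          gcongr
          exact le_max_right _ _

end Aux

/-- Let `1 ≤ p < ∞` and `W` a matrix weight. Suppose `(A_Q)` is a family of
positive definite matrices with `|A_Q z|^p ≍ |Q|⁻¹ ∫_Q |W^{1/p}(x) z|^p dx` for all `z` and all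
cubes `Q` (reducing operators of order `p`), with uniform constants. If `W` is doubling of
order `p` with exponent `β`, then `(A_Q)` is strongly doubling of order `(β, p)`:
`‖A_Q A_P⁻¹‖^p ≤ C max{(ℓ(P)/ℓ(Q))^n, (ℓ(Q)/ℓ(P))^{β−n}} (1 + |x_Q − x_P|/max{ℓ(P),ℓ(Q)})^β`. -/
theorem reducing_operators_strongly_doubling {n m : ℕ} (p β : ℝ) (hp : 1 ≤ p) (hβ : 0 < β)
    (W : EuclideanSpace ℝ (Fin n) → Matrix (Fin m) (Fin m) ℂ)
    (hWpos : ∀ x, (W x).PosSemidef)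
    (hdoubling : ∀ (x : EuclideanSpace ℝ (Fin n)) (l : ℝ) (z : EuclideanSpace ℂ (Fin m)),
      0 < l →
      (∫⁻ y in cubeADouble x l,
          (‖Matrix.toEuclideanCLM (𝕜 := ℂ) (matrixRpowInv p (W y)) z‖₊ : ℝ≥0∞) ^ p) ≤
        ENNReal.ofReal (2 ^ β) *
          ∫⁻ y in cubeA x l,
            (‖Matrix.toEuclideanCLM (𝕜 := ℂ) (matrixRpowInv p (W y)) z‖₊ : ℝ≥0∞) ^ p)
    (A : EuclideanSpace ℝ (Fin n) → ℝ → Matrix (Fin m) (Fin m) ℂ)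
    (hApos : ∀ x l, (A x l).PosDef)
    (c₁ c₂ : ℝ) (hc₁ : 0 < c₁) (hc₂ : 0 < c₂)
    (hreduce : ∀ (x : EuclideanSpace ℝ (Fin n)) (l : ℝ) (z : EuclideanSpace ℂ (Fin m)),
      0 < l →
      ENNReal.ofReal c₁ * cubeAvg p W x l z ≤
          (‖Matrix.toEuclideanCLM (𝕜 := ℂ) (A x l) z‖₊ : ℝ≥0∞) ^ p ∧
        (‖Matrix.toEuclideanCLM (𝕜 := ℂ) (A x l) z‖₊ : ℝ≥0∞) ^ p ≤
          ENNReal.ofReal c₂ * cubeAvg p W x l z) :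
    ∃ C : ℝ, 0 < C ∧
      ∀ (xQ xP : EuclideanSpace ℝ (Fin n)) (lQ lP : ℝ), 0 < lQ → 0 < lP →
        ‖Matrix.toEuclideanCLM (𝕜 := ℂ) (A xQ lQ * (A xP lP)⁻¹)‖ ^ p ≤
          C * max ((lP / lQ) ^ (n : ℝ)) ((lQ / lP) ^ (β - n)) *
            (1 + dist xQ xP / max lP lQ) ^ β := by
  have hp0 : (0:ℝ) < p := lt_of_lt_of_le one_pos hp
  have hpne : p ≠ 0 := hp0.ne'
  refine ⟨c₂ / c₁ * 6 ^ β, by positivity, ?_⟩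
  intro xQ xP lQ lP hlQ hlP
  have hD0 : (0:ℝ) ≤ dist xQ xP := dist_nonneg
  have hr1 : (1:ℝ) ≤ (lP + 2 * lQ + 2 * dist xQ xP) / lP := by
    rw [le_div_iff₀ hlP]; nlinarith
  obtain ⟨k, hk1, hk2⟩ := exists_pow_two' _ hr1
  have hkpow : lP + 2 * lQ + 2 * dist xQ xP ≤ 2 ^ k * lP := by
    rw [div_le_iff₀ hlP] at hk1; linarith
  set K : ℝ := c₂ / c₁ * (lP ^ n / lQ ^ n) * ((2:ℝ) ^ k) ^ β with hKdef
  have hK0 : 0 < K := by positivity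
  set T := Matrix.toEuclideanCLM (𝕜 := ℂ) (A xQ lQ * (A xP lP)⁻¹) with hT
  -- key pointwise bound
  have key : ∀ z : EuclideanSpace ℂ (Fin m), ‖T z‖ ^ p ≤ K * ‖z‖ ^ p := by
    intro z
    set w := Matrix.toEuclideanCLM (𝕜 := ℂ) ((A xP lP)⁻¹) z with hw
    have hTz : T z = Matrix.toEuclideanCLM (𝕜 := ℂ) (A xQ lQ) w := by
      rw [hT, map_mul]; rfl
    have hPw : Matrix.toEuclideanCLM (𝕜 := ℂ) (A xP lP) w = z := by
      have h1 : Matrix.toEuclideanCLM (𝕜 := ℂ) (A xP lP * (A xP lP)⁻¹) z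
          = Matrix.toEuclideanCLM (𝕜 := ℂ) (A xP lP) w := by rw [map_mul]; rfl
      rw [← h1, Matrix.mul_nonsing_inv _
        ((Matrix.isUnit_iff_isUnit_det _).mp (hApos xP lP).isUnit)]
      simp
    have hIQ : (∫⁻ y in cubeA xQ lQ,
          (‖Matrix.toEuclideanCLM (𝕜 := ℂ) (matrixRpowInv p (W y)) w‖₊ : ℝ≥0∞) ^ p)
        ≤ (ENNReal.ofReal (2 ^ β)) ^ k * ∫⁻ y in cubeA xP lP,
          (‖Matrix.toEuclideanCLM (𝕜 := ℂ) (matrixRpowInv p (W y)) w‖₊ : ℝ≥0∞) ^ p := by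
      refine le_trans (lintegral_mono_set (cube_subset_iter' xQ xP lQ lP hlQ hlP k hkpow)) ?_
      exact iterate_doubling_aux'
        (fun y => (‖Matrix.toEuclideanCLM (𝕜 := ℂ) (matrixRpowInv p (W y)) w‖₊ : ℝ≥0∞) ^ p)
        _ (fun x l hl => hdoubling x l w hl) xP lP hlP k
    have h2 := (hreduce xQ lQ w hlQ).2
    have h1 := (hreduce xP lP w hlP).1
    rw [hPw] at h1
    unfold cubeAvg at h1 h2
    have ha0 : ENNReal.ofReal c₁ ≠ 0 := (ENNReal.ofReal_pos.mpr hc₁).ne'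
    have hat : ENNReal.ofReal c₁ ≠ ⊤ := ENNReal.ofReal_ne_top
    have hb0 : ENNReal.ofReal (lP ^ n) ≠ 0 := (ENNReal.ofReal_pos.mpr (by positivity)).ne'
    have hbt : ENNReal.ofReal (lP ^ n) ≠ ⊤ := ENNReal.ofReal_ne_top
    have hIP : (∫⁻ y in cubeA xP lP,
          (‖Matrix.toEuclideanCLM (𝕜 := ℂ) (matrixRpowInv p (W y)) w‖₊ : ℝ≥0∞) ^ p)
        ≤ (ENNReal.ofReal c₁)⁻¹ * (ENNReal.ofReal (lP ^ n) * (‖z‖₊ : ℝ≥0∞) ^ p) := by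
      set I := ∫⁻ y in cubeA xP lP,
          (‖Matrix.toEuclideanCLM (𝕜 := ℂ) (matrixRpowInv p (W y)) w‖₊ : ℝ≥0∞) ^ p with hI
      have e : ((ENNReal.ofReal c₁)⁻¹ * ENNReal.ofReal (lP ^ n)) *
          (ENNReal.ofReal c₁ * ((ENNReal.ofReal (lP ^ n))⁻¹ * I))
          = ((ENNReal.ofReal c₁)⁻¹ * ENNReal.ofReal c₁) *
            ((ENNReal.ofReal (lP ^ n)) * (ENNReal.ofReal (lP ^ n))⁻¹) * I := by ring
      calc I = ((ENNReal.ofReal c₁)⁻¹ * ENNReal.ofReal (lP ^ n)) *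
            (ENNReal.ofReal c₁ * ((ENNReal.ofReal (lP ^ n))⁻¹ * I)) := by
            rw [e, ENNReal.inv_mul_cancel ha0 hat, ENNReal.mul_inv_cancel hb0 hbt,
              one_mul, one_mul]
        _ ≤ ((ENNReal.ofReal c₁)⁻¹ * ENNReal.ofReal (lP ^ n)) * (‖z‖₊ : ℝ≥0∞) ^ p :=
            mul_le_mul_right h1 _
        _ = (ENNReal.ofReal c₁)⁻¹ * (ENNReal.ofReal (lP ^ n) * (‖z‖₊ : ℝ≥0∞) ^ p) := by
            ring
    have hchain : (‖T z‖₊ : ℝ≥0∞) ^ p ≤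
        ENNReal.ofReal c₂ * ((ENNReal.ofReal (lQ ^ n))⁻¹ *
          ((ENNReal.ofReal (2 ^ β)) ^ k *
            ((ENNReal.ofReal c₁)⁻¹ * (ENNReal.ofReal (lP ^ n) * (‖z‖₊ : ℝ≥0∞) ^ p)))) := by
      rw [hTz]
      refine le_trans h2 ?_
      refine mul_le_mul_right (mul_le_mul_right ?_ _) _
      exact le_trans hIQ (mul_le_mul_right hIP _)
    have hcoef : ENNReal.ofReal c₂ * ((ENNReal.ofReal (lQ ^ n))⁻¹ *
          ((ENNReal.ofReal (2 ^ β)) ^ k * ((ENNReal.ofReal c₁)⁻¹ * ENNReal.ofReal (lP ^ n))))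
        = ENNReal.ofReal K := by
      rw [← ENNReal.ofReal_inv_of_pos (by positivity : (0:ℝ) < lQ ^ n),
        ← ENNReal.ofReal_inv_of_pos hc₁,
        ← ENNReal.ofReal_pow (by positivity : (0:ℝ) ≤ (2:ℝ) ^ β),
        ← ENNReal.ofReal_mul (le_of_lt (inv_pos.mpr hc₁)),
        ← ENNReal.ofReal_mul (by positivity : (0:ℝ) ≤ ((2:ℝ) ^ β) ^ k),
        ← ENNReal.ofReal_mul (le_of_lt (inv_pos.mpr (by positivity : (0:ℝ) < lQ ^ n))),
        ← ENNReal.ofReal_mul hc₂.le]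
      congr 1
      have hpow : ((2:ℝ) ^ β) ^ k = ((2:ℝ) ^ k) ^ β := by
        rw [← Real.rpow_natCast ((2:ℝ) ^ β) k, ← Real.rpow_natCast (2:ℝ) k,
          ← Real.rpow_mul (by norm_num), ← Real.rpow_mul (by norm_num), mul_comm]
      rw [hKdef, hpow]
      field_simp
    have hZ : (‖T z‖₊ : ℝ≥0∞) ^ p ≤ ENNReal.ofReal K * (‖z‖₊ : ℝ≥0∞) ^ p := by
      refine le_trans hchain (le_of_eq ?_)
      rw [← hcoef]; ring
    have hofr : ENNReal.ofReal (‖T z‖ ^ p) ≤ ENNReal.ofReal (K * ‖z‖ ^ p) := by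
      rw [← ENNReal.ofReal_rpow_of_nonneg (norm_nonneg _) hp0.le,
        ofReal_norm, ENNReal.ofReal_mul hK0.le,
        ← ENNReal.ofReal_rpow_of_nonneg (norm_nonneg _) hp0.le, ofReal_norm]
      exact hZ
    exact (ENNReal.ofReal_le_ofReal_iff (by positivity)).mp hofr
  -- operator norm bound
  have hopn : ‖T‖ ≤ K ^ (1/p) := by
    refine T.opNorm_le_bound (by positivity) fun z => ?_
    have h := key z
    have h1 : ‖T z‖ = (‖T z‖ ^ p) ^ (1/p) := by
      rw [← Real.rpow_mul (norm_nonneg _), mul_one_div_cancel hpne, Real.rpow_one]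
    rw [h1]
    calc (‖T z‖ ^ p) ^ (1/p) ≤ (K * ‖z‖ ^ p) ^ (1/p) :=
          Real.rpow_le_rpow (by positivity) h (by positivity)
      _ = K ^ (1/p) * ‖z‖ := by
          rw [Real.mul_rpow hK0.le (by positivity), ← Real.rpow_mul (norm_nonneg _),
            mul_one_div_cancel hpne, Real.rpow_one]
  have hTp : ‖T‖ ^ p ≤ K := by
    have h := Real.rpow_le_rpow (norm_nonneg _) hopn hp0.le
    rwa [← Real.rpow_mul hK0.le, one_div_mul_cancel hpne, Real.rpow_one] at h
  refine le_trans hTp ?_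
  have harith := aux_arith' n β lP lQ (dist xQ xP) hβ hlP hlQ hD0
  calc K = c₂ / c₁ * ((lP / lQ) ^ n * ((2:ℝ) ^ k) ^ β) := by
        rw [hKdef, div_pow]; ring
    _ ≤ c₂ / c₁ * ((lP / lQ) ^ n *
          (2 * ((lP + 2 * lQ + 2 * dist xQ xP) / lP)) ^ β) := by
        have hb := Real.rpow_le_rpow (by positivity : (0:ℝ) ≤ (2:ℝ)^k) hk2 hβ.le
        gcongr <;> first | exact hb | positivity | exact div_nonneg hc₂.le hc₁.le
    _ ≤ c₂ / c₁ * (6 ^ β * (max ((lP / lQ) ^ (n : ℝ)) ((lQ / lP) ^ (β - n)) *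
          (1 + dist xQ xP / max lP lQ) ^ β)) := by
        gcongr <;> first | exact harith | positivity | exact div_nonneg hc₂.le hc₁.le
    _ = c₂ / c₁ * 6 ^ β * max ((lP / lQ) ^ (n : ℝ)) ((lQ / lP) ^ (β - n)) *
          (1 + dist xQ xP / max lP lQ) ^ β := by ring


end
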